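/- Let p be an odd prime, m, n ≥ 1, and λ a unit of ZMod (p^m) with λ^(p^n) = 1. Then the Frattini subgroup of G(λ,m,n) equals the subgroup {(a,x) ∈ G(λ,m,n) : p divides a and p divides x}. -/

import Mathlib

def IsBeauvilleStructure {G : Type*} [Group G] (x y z a b c : G) : Prop :=
  x * y * z = 1 ∧ a * b * c = 1 ∧
  Subgroup.closure {x, y, z} = ⊤ ∧ Subgroup.closure {a, b, c} = ⊤ ∧
  ∀ u ∈ ({x, y, z} : Set G), ∀ v ∈ ({a, b, c} : Set G), ∀ g : G, ∀ i j : ℤ,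
    u ^ i = g * v ^ j * g⁻¹ → u ^ i = 1

/-- The homomorphism `ZMod (p^n) → (ZMod (p^m))ˣ` sending (the class of) `x` to `λ^x`,
well-defined since `λ^(p^n) = 1`. -/
def zmodUnitHom (p m n : ℕ) (lam : (ZMod (p^m))ˣ) (h : lam ^ (p^n) = 1) :
    Multiplicative (ZMod (p^n)) →* (ZMod (p^m))ˣ :=
  AddMonoidHom.toMultiplicativeLeft
    (ZMod.lift (p^n) ⟨(zmultiplesHom (Additive (ZMod (p^m))ˣ)) (Additive.ofMul lam), by
      show ((p^n : ℕ) : ℤ) • Additive.ofMul lam = 0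
      rw [← ofMul_zpow, zpow_natCast, h]
      rfl⟩)

/-- Additive automorphisms of `R` as multiplicative automorphisms of `Multiplicative R`. -/
def addAutToMulAut (R : Type*) [AddZeroClass R] :
    Multiplicative (AddAut R) →* MulAut (Multiplicative R) where
  toFun e := AddEquiv.toMultiplicative (Multiplicative.toAdd e)
  map_one' := rfl
  map_mul' _ _ := rfl

/-- The action of `ZMod (p^n)` on `ZMod (p^m)` where `x` acts by multiplication by `λ^x`. -/
def beauvilleAut (p m n : ℕ) (lam : (ZMod (p^m))ˣ) (h : lam ^ (p^n) = 1) :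
    Multiplicative (ZMod (p^n)) →* MulAut (Multiplicative (ZMod (p^m))) :=
  ((addAutToMulAut (ZMod (p^m))).comp AddAut.mulLeft).comp (zmodUnitHom p m n lam h)

/-- The semidirect product `G(λ,m,n) = ZMod (p^m) ⋊_λ ZMod (p^n)`. -/
abbrev BeauvilleGroup (p m n : ℕ) (lam : (ZMod (p^m))ˣ) (h : lam ^ (p^n) = 1) :=
  SemidirectProduct (Multiplicative (ZMod (p^m))) (Multiplicative (ZMod (p^n)))
    (beauvilleAut p m n lam h)


lemma unit_cast_eq_one {p k t : ℕ} (hp : p.Prime) (hk : k ≠ 0) (v : (ZMod (p^k))ˣ)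
    (hv : v ^ (p^t) = 1) :
    (ZMod.castHom (dvd_pow_self p hk) (ZMod p)) (v : ZMod (p^k)) = 1 := by
  haveI : Fact p.Prime := ⟨hp⟩
  set f := (ZMod.castHom (dvd_pow_self p hk) (ZMod p)).toMonoidHom with hf
  set w := Units.map f v with hwdef
  have hw1 : w ^ (p^t) = 1 := by rw [← map_pow, hv, map_one]
  have h1 : orderOf w ∣ p ^ t := orderOf_dvd_of_pow_eq_one hw1
  have h2 : orderOf w ∣ p - 1 := by
    have := orderOf_dvd_card (x := w)
    rwa [ZMod.card_units_eq_totient, Nat.totient_prime hp] at this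
  have hg : orderOf w ∣ Nat.gcd (p ^ t) (p - 1) := Nat.dvd_gcd h1 h2
  have hcop : Nat.Coprime (p ^ t) (p - 1) := by
    apply Nat.Coprime.pow_left
    have hd := Nat.dvd_sub (Nat.gcd_dvd_left p (p-1)) (Nat.gcd_dvd_right p (p-1))
    have hp2 := hp.two_le
    have h1' : p - (p - 1) = 1 := by omega
    rw [h1'] at hd
    exact Nat.dvd_one.mp hd
  rw [hcop] at hg
  have hw : w = 1 := orderOf_eq_one_iff.mp (Nat.dvd_one.mp hg)
  rw [Units.ext_iff] at hw
  simp only [hwdef, Units.coe_map, Units.val_one] at hw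
  exact hw

lemma cast_eq_zero_iff_pdvd {p k : ℕ} (hp : p.Prime) (hk : k ≠ 0) (a : ZMod (p^k)) :
    (ZMod.castHom (dvd_pow_self p hk) (ZMod p)) a = 0 ↔
      ∃ b : ZMod (p^k), a = (p : ZMod (p^k)) * b := by
  haveI : Fact p.Prime := ⟨hp⟩
  haveI : NeZero (p ^ k) := ⟨pow_ne_zero _ hp.pos.ne'⟩
  constructor
  · intro h0
    have hv : ((a.val : ℕ) : ZMod p) = 0 := by
      rwa [ZMod.castHom_apply, ← ZMod.natCast_val] at h0
    obtain ⟨t, ht⟩ := (ZMod.natCast_eq_zero_iff _ _).mp hv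
    refine ⟨(t : ZMod (p^k)), ?_⟩
    rw [← ZMod.natCast_zmod_val a, ht]
    push_cast
    ring
  · rintro ⟨b, rfl⟩
    rw [map_mul, map_natCast, ZMod.natCast_self, zero_mul]

lemma isCoatom_of_index_prime {G : Type*} [Group G] {p : ℕ} (hp : p.Prime) {H : Subgroup G}
    (hH : H.index = p) : IsCoatom H := by
  constructor
  · intro htop
    rw [htop, Subgroup.index_top] at hH
    exact hp.one_lt.ne' hH.symm
  · intro K hK
    have hle : H ≤ K := hK.le
    have hmul := Subgroup.relIndex_mul_index hle
    rw [hH] at hmul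
    have hdvd : K.index ∣ p := Dvd.intro_left _ hmul
    rcases (Nat.Prime.eq_one_or_self_of_dvd hp _ hdvd) with h1 | h1
    · exact Subgroup.index_eq_one.mp h1
    · exfalso
      rw [h1] at hmul
      have h2 : H.relIndex K = 1 :=
        Nat.eq_of_mul_eq_mul_right hp.pos (by rw [one_mul]; exact hmul)
      exact hK.ne' (le_antisymm (Subgroup.relIndex_eq_one.mp h2) hle)

lemma pow_prime_mem_coatom {G : Type*} [Group G] [Finite G] {p : ℕ} (hp : p.Prime)
    (hG : IsPGroup p G) {M : Subgroup G} (hM : IsCoatom M) (g : G) : g ^ p ∈ M := by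
  haveI : Fact p.Prime := ⟨hp⟩
  haveI hnil : Group.IsNilpotent G := hG.isNilpotent
  haveI hMn : M.Normal := Subgroup.NormalizerCondition.normal_of_coatom M (normalizerCondition_of_isNilpotent (G := G)) hM
  set π := QuotientGroup.mk' M with hπ
  have hsur : Function.Surjective π := QuotientGroup.mk'_surjective M
  have hd : ∀ K : Subgroup (G ⧸ M), K = ⊥ ∨ K = ⊤ := by
    intro K
    have hKmap := Subgroup.map_comap_eq_self_of_surjective hsur K
    have hMle : M ≤ Subgroup.comap π K := by
      intro x hx
      have hx1 : π x = 1 := (QuotientGroup.eq_one_iff x).mpr hx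
      simp [Subgroup.mem_comap, hx1, one_mem]
    rcases eq_or_lt_of_le hMle with heq | hlt
    · left
      rw [← hKmap, ← heq]
      rw [Subgroup.map_eq_bot_iff, QuotientGroup.ker_mk']
    · right
      rw [← hKmap, hM.2 _ hlt, Subgroup.map_top_of_surjective _ hsur]
  have hqp : IsPGroup p (G ⧸ M) := hG.to_quotient M
  set x : G ⧸ M := (g : G ⧸ M) with hx
  suffices hq : x ^ p = 1 by
    have : ((g ^ p : G) : G ⧸ M) = 1 := by
      rw [← hq]; rfl
    exact (QuotientGroup.eq_one_iff _).mp this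
  rcases hd (Subgroup.zpowers (x ^ p)) with hbot | htop
  · have := Subgroup.mem_zpowers (x ^ p)
    rwa [hbot, Subgroup.mem_bot] at this
  · have hgmem : x ∈ Subgroup.zpowers (x ^ p) := htop ▸ Subgroup.mem_top _
    obtain ⟨k, hk⟩ := Subgroup.mem_zpowers_iff.mp hgmem
    have hzp : x ^ ((p : ℤ) * k - 1) = 1 := by
      have h1 : x ^ ((p : ℤ) * k) = x := by
        rw [zpow_mul, zpow_natCast]; exact hk
      rw [zpow_sub, h1, zpow_one, mul_inv_cancel]
    have hdvd : (orderOf x : ℤ) ∣ ((p : ℤ) * k - 1) := orderOf_dvd_iff_zpow_eq_one.mpr hzp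
    obtain ⟨t, ht⟩ := hqp x
    have hox : orderOf x ∣ p ^ t := orderOf_dvd_of_pow_eq_one ht
    obtain ⟨s, -, hsx⟩ := (Nat.dvd_prime_pow hp).mp hox
    cases s with
    | zero =>
      have : x = 1 := orderOf_eq_one_iff.mp (by simpa using hsx)
      rw [this, one_pow]
    | succ s' =>
      exfalso
      have hpd : (p : ℤ) ∣ (orderOf x : ℤ) := by
        rw [hsx]; push_cast; exact ⟨(p : ℤ) ^ s', by ring⟩
      have h1 : (p : ℤ) ∣ ((p : ℤ) * k - 1) := hpd.trans hdvd
      have h2 : (p : ℤ) ∣ 1 := by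
        have : (p : ℤ) ∣ (p : ℤ) * k := ⟨k, rfl⟩
        have := dvd_sub this h1
        simpa using this
      have := Int.le_of_dvd one_pos h2
      have := hp.two_le
      omega

/-- For odd `p`, the Frattini subgroup of `G(λ,m,n)` consists exactly of the
pairs `(a,x)` with `p ∣ a` and `p ∣ x`. -/
theorem frattini_semidirect_eq_divisible_set
    (p m n : ℕ) (hp : p.Prime) (hodd : Odd p) (hm : 1 ≤ m) (hn : 1 ≤ n)
    (lam : (ZMod (p ^ m))ˣ) (h : lam ^ (p ^ n) = 1) :
    (frattini (BeauvilleGroup p m n lam h) : Set (BeauvilleGroup p m n lam h)) =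
      {g : BeauvilleGroup p m n lam h |
        (∃ b : ZMod (p ^ m), Multiplicative.toAdd g.left = (p : ZMod (p ^ m)) * b) ∧
        (∃ c : ZMod (p ^ n), Multiplicative.toAdd g.right = (p : ZMod (p ^ n)) * c)} := by

  haveI : Fact p.Prime := ⟨hp⟩
  have hm0 : m ≠ 0 := by omega
  have hn0 : n ≠ 0 := by omega
  haveI : NeZero (p ^ m) := ⟨pow_ne_zero _ hp.pos.ne'⟩
  haveI : NeZero (p ^ n) := ⟨pow_ne_zero _ hp.pos.ne'⟩
  set G := BeauvilleGroup p m n lam h with hGdef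
  let e : G ≃ (Multiplicative (ZMod (p ^ m)) × Multiplicative (ZMod (p ^ n))) :=
    { toFun := fun g => (g.left, g.right)
      invFun := fun z => ⟨z.1, z.2⟩
      left_inv := fun g => rfl
      right_inv := fun z => rfl }
  haveI : Finite G := Finite.of_equiv _ e.symm
  have hcard : Nat.card G = p ^ (m + n) := by
    rw [Nat.card_congr e, Nat.card_prod, Nat.card_congr Multiplicative.toAdd,
      Nat.card_congr Multiplicative.toAdd, Nat.card_zmod, Nat.card_zmod, pow_add]
  have hpG : IsPGroup p G := IsPGroup.of_card hcard
  let r1 := ZMod.castHom (dvd_pow_self p hm0) (ZMod p)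
  let r2 := ZMod.castHom (dvd_pow_self p hn0) (ZMod p)
  have hux : ∀ x : Multiplicative (ZMod (p ^ n)),
      r1 ((zmodUnitHom p m n lam h x : (ZMod (p ^ m))ˣ) : ZMod (p ^ m)) = 1 := by
    intro x
    have hx : x ^ (p ^ n) = 1 := by
      have hh : Multiplicative.toAdd (x ^ (p ^ n)) = 0 := by
        rw [toAdd_pow]
        show (p ^ n : ℕ) • Multiplicative.toAdd x = 0
        rw [nsmul_eq_mul, ZMod.natCast_self, zero_mul]
      exact hh
    exact unit_cast_eq_one hp hm0 _ (by rw [← map_pow, hx, map_one])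
  let F1 : G →* Multiplicative (ZMod p) :=
    { toFun := fun g => Multiplicative.ofAdd (r1 (Multiplicative.toAdd g.left))
      map_one' := by
        show Multiplicative.ofAdd (r1 (Multiplicative.toAdd (1 : G).left)) = 1
        rw [SemidirectProduct.one_left]
        simp
      map_mul' := by
        intro g g'
        show Multiplicative.ofAdd (r1 (Multiplicative.toAdd (g * g').left)) = _
        have h1 : Multiplicative.toAdd (g * g').left
            = Multiplicative.toAdd g.left +
              ((zmodUnitHom p m n lam h g.right : (ZMod (p ^ m))ˣ) : ZMod (p ^ m)) *
                Multiplicative.toAdd g'.left := rfl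
        rw [h1, map_add, map_mul, hux, one_mul]
        rfl }
  let F2 : G →* Multiplicative (ZMod p) :=
    (AddMonoidHom.toMultiplicative r2.toAddMonoidHom).comp SemidirectProduct.rightHom
  have hF1 : ∀ g : G, F1 g = Multiplicative.ofAdd (r1 (Multiplicative.toAdd g.left)) :=
    fun g => rfl
  have hF2 : ∀ g : G, F2 g = Multiplicative.ofAdd (r2 (Multiplicative.toAdd g.right)) :=
    fun g => rfl
  have hsur1 : Function.Surjective F1 := by
    intro t
    obtain ⟨a, ha⟩ := ZMod.natCast_zmod_surjective (n := p) (Multiplicative.toAdd t)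
    refine ⟨SemidirectProduct.inl (Multiplicative.ofAdd ((a : ZMod (p ^ m)))), ?_⟩
    rw [hF1]
    simp only [SemidirectProduct.left_inl, toAdd_ofAdd, map_natCast]
    rw [ha, ofAdd_toAdd]
  have hsur2 : Function.Surjective F2 := by
    intro t
    obtain ⟨a, ha⟩ := ZMod.natCast_zmod_surjective (n := p) (Multiplicative.toAdd t)
    refine ⟨SemidirectProduct.inr (Multiplicative.ofAdd ((a : ZMod (p ^ n)))), ?_⟩
    rw [hF2]
    simp only [SemidirectProduct.right_inr, toAdd_ofAdd, map_natCast]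
    rw [ha, ofAdd_toAdd]
  have hidx : ∀ F : G →* Multiplicative (ZMod p), Function.Surjective F →
      F.ker.index = p := by
    intro F hs
    rw [Subgroup.index_ker, MonoidHom.range_eq_top.mpr hs,
      Nat.card_congr Subgroup.topEquiv.toEquiv, Nat.card_congr Multiplicative.toAdd,
      Nat.card_zmod]
  have c1 : IsCoatom F1.ker := isCoatom_of_index_prime hp (hidx F1 hsur1)
  have c2 : IsCoatom F2.ker := isCoatom_of_index_prime hp (hidx F2 hsur2)
  ext g
  simp only [SetLike.mem_coe, Set.mem_setOf_eq]
  constructor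
  · intro hg
    constructor
    · have : g ∈ F1.ker := frattini_le_coatom c1 hg
      rw [MonoidHom.mem_ker, hF1, ofAdd_eq_one] at this
      exact (cast_eq_zero_iff_pdvd hp hm0 _).mp this
    · have : g ∈ F2.ker := frattini_le_coatom c2 hg
      rw [MonoidHom.mem_ker, hF2, ofAdd_eq_one] at this
      exact (cast_eq_zero_iff_pdvd hp hn0 _).mp this
  · rintro ⟨⟨b, hb⟩, ⟨c, hc⟩⟩
    have key : ∀ M : Subgroup G, IsCoatom M → g ∈ M := by
      intro M hM
      have hgl : g = (SemidirectProduct.inl (φ := beauvilleAut p m n lam h)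
            (Multiplicative.ofAdd b)) ^ p *
          (SemidirectProduct.inr (φ := beauvilleAut p m n lam h)
            (Multiplicative.ofAdd c)) ^ p := by
        have e1 : (Multiplicative.ofAdd b) ^ p = g.left := by
          rw [← ofAdd_nsmul, nsmul_eq_mul, ← hb, ofAdd_toAdd]
        have e2 : (Multiplicative.ofAdd c) ^ p = g.right := by
          rw [← ofAdd_nsmul, nsmul_eq_mul, ← hc, ofAdd_toAdd]
        calc g = SemidirectProduct.inl g.left * SemidirectProduct.inr g.right :=
              (SemidirectProduct.inl_left_mul_inr_right g).symm
          _ = _ := by rw [← e1, ← e2, map_pow, map_pow]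
      rw [hgl]
      exact mul_mem (pow_prime_mem_coatom hp hpG hM _) (pow_prime_mem_coatom hp hpG hM _)
    rw [frattini, Order.radical]
    simp only [Subgroup.mem_iInf, Set.mem_setOf_eq]
    exact key
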